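/- Monotonicity of closest-vector coordinates in a triangular lattice. Let d > 0, n ≥ 1, and let b₁, …, bₙ be vectors in a real inner product space with ‖b_i‖ = d for all i and ⟨b_i, b_j⟩ = d²/2 for all i ≠ j. Let x̄ ∈ ℝⁿ and let ȳ ∈ ℤⁿ be a minimizer over z ∈ ℤⁿ of z ↦ ‖Σ_{i=1}^n (x̄_i − z_i) b_i‖. Then for all indices i, j: if x̄_i < x̄_j then ȳ_i ≤ ȳ_j. -/

import Mathlib

/-- Monotonicity of closest-vector coordinates in a triangular lattice: if
`ȳ ∈ ℤⁿ` minimizes `z ↦ ‖Σ (x̄_i − z_i) b_i‖` over `ℤⁿ`, where the `b_i` form a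
triangular basis (`‖b_i‖ = d`, `⟨b_i, b_j⟩ = d²/2` for `i ≠ j`), then
`x̄_i < x̄_j` implies `ȳ_i ≤ ȳ_j`. -/
theorem triangular_closest_vector_monotone {V : Type*}
    [NormedAddCommGroup V] [InnerProductSpace ℝ V]
    {n : ℕ} (hn : 1 ≤ n) (d : ℝ) (hd : 0 < d) (b : Fin n → V)
    (hnorm : ∀ i, ‖b i‖ = d)
    (hinner : ∀ i j, i ≠ j → (inner ℝ (b i) (b j) : ℝ) = d ^ 2 / 2)
    (xbar : Fin n → ℝ) (ybar : Fin n → ℤ)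
    (hmin : ∀ z : Fin n → ℤ,
      ‖∑ i, (xbar i - (ybar i : ℝ)) • b i‖ ≤ ‖∑ i, (xbar i - (z i : ℝ)) • b i‖) :
    ∀ i j : Fin n, xbar i < xbar j → ybar i ≤ ybar j := by
  have hG : ∀ k l, (inner ℝ (b k) (b l) : ℝ) = d ^ 2 / 2 + if k = l then d ^ 2 / 2 else 0 := by
    intro k l
    by_cases h : k = l
    · subst h
      rw [real_inner_self_eq_norm_sq, hnorm k]
      simp
    · rw [hinner k l h]; simp [h]
  have normsq : ∀ c : Fin n → ℝ,
      ‖∑ i, c i • b i‖ ^ 2 = d ^ 2 / 2 * ((∑ i, c i) ^ 2 + ∑ i, (c i) ^ 2) := by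
    intro c
    rw [← real_inner_self_eq_norm_sq]
    simp only [sum_inner, inner_sum, real_inner_smul_left, real_inner_smul_right]
    have key : ∀ k, ∑ l, c k * (c l * (inner ℝ (b l) (b k) : ℝ))
        = d ^ 2 / 2 * (c k * ∑ l, c l) + d ^ 2 / 2 * (c k) ^ 2 := by
      intro k
      simp only [hG]
      rw [Finset.mul_sum]
      rw [Finset.sum_congr rfl (fun l _ => by ring_nf :
        ∀ l ∈ Finset.univ, c k * (c l * (d ^ 2 / 2 + if l = k then d ^ 2 / 2 else 0))
          = d ^ 2 / 2 * (c k * c l) + c k * c l * (if l = k then d ^ 2 / 2 else 0))]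
      rw [Finset.sum_add_distrib]
      simp [Finset.sum_ite_eq, Finset.mul_sum]
      ring
    rw [Finset.sum_congr rfl (fun k _ => key k), Finset.sum_add_distrib,
      ← Finset.mul_sum, ← Finset.mul_sum, ← Finset.sum_mul]
    ring
  intro i j hxy
  by_contra hcon
  push_neg at hcon
  have hij : i ≠ j := fun h => lt_irrefl _ (h ▸ hxy)
  set z : Fin n → ℤ := fun k => if k = i then ybar j else if k = j then ybar i else ybar k with hz
  have h1 := hmin z
  have h2 : ‖∑ k, (xbar k - (ybar k : ℝ)) • b k‖ ^ 2
      ≤ ‖∑ k, (xbar k - (z k : ℝ)) • b k‖ ^ 2 :=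
    pow_le_pow_left₀ (norm_nonneg _) h1 2
  rw [normsq, normsq] at h2
  have hsub : ({i, j} : Finset (Fin n)) ⊆ Finset.univ := Finset.subset_univ _
  have split : ∀ A : Fin n → ℝ, ∑ k, A k = A i + A j + ∑ k ∈ Finset.univ \ {i, j}, A k := by
    intro A
    rw [← Finset.sum_sdiff hsub, Finset.sum_pair hij]
    ring
  have tail : ∀ k ∈ Finset.univ \ ({i, j} : Finset (Fin n)), z k = ybar k := by
    intro k hk
    simp only [Finset.mem_sdiff, Finset.mem_insert, Finset.mem_singleton, not_or] at hk
    simp [hz, hk.2.1, hk.2.2]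
  have hzi : (z i : ℝ) = (ybar j : ℝ) := by simp [hz]
  have hzj : (z j : ℝ) = (ybar i : ℝ) := by simp [hz, hij, Ne.symm hij]
  have ht1 : ∑ k ∈ Finset.univ \ ({i, j} : Finset (Fin n)), (xbar k - (z k : ℝ))
      = ∑ k ∈ Finset.univ \ ({i, j} : Finset (Fin n)), (xbar k - (ybar k : ℝ)) :=
    Finset.sum_congr rfl fun k hk => by rw [tail k hk]
  have ht2 : ∑ k ∈ Finset.univ \ ({i, j} : Finset (Fin n)), (xbar k - (z k : ℝ)) ^ 2
      = ∑ k ∈ Finset.univ \ ({i, j} : Finset (Fin n)), (xbar k - (ybar k : ℝ)) ^ 2 :=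
    Finset.sum_congr rfl fun k hk => by rw [tail k hk]
  rw [split (fun k => xbar k - (ybar k : ℝ)), split (fun k => xbar k - (z k : ℝ)),
    split (fun k => (xbar k - (ybar k : ℝ)) ^ 2), split (fun k => (xbar k - (z k : ℝ)) ^ 2),
    ht1, ht2, hzi, hzj] at h2
  have hpos : (0 : ℝ) < d ^ 2 / 2 := by positivity
  have hcast : (ybar j : ℝ) < (ybar i : ℝ) := by exact_mod_cast hcon
  nlinarith [mul_pos (sub_pos.2 hxy) (sub_pos.2 hcast),
    mul_pos hpos (mul_pos (sub_pos.2 hxy) (sub_pos.2 hcast))]
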